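/- For any finite set F of matrices in M_d(Q̄), the normalized height satisfies ĥ(F) = lim_{n→∞} (1/n) h(F^n) = inf_{n∈ℕ} (1/n) h(F^n). -/

import Mathlib

/-!
STATEMENT 14.  For a finite set `F` of matrices in `M_d(Q̄)` (formalized as a finite set
of matrices over an arbitrary number field `K`; the heights are independent of the
choice of `K`), the normalized height satisfies
`ĥ(F) = lim_{n→∞} (1/n) h(F^n) = inf_{n ≥ 1} (1/n) h(F^n)`.
Places of `K` are accounted for by ring embeddings of `K` into `ℂ` and into the
algebraic closures of the `ℚ_p` (each place `v` counted with its local degree `n_v`);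
`vp p` is the unique absolute value on the algebraic closure of `ℚ_p` extending the
`p`-adic one, supplied as data with the extension property.
-/

open Filter
open scoped Pointwise

noncomputable section

/-- The operator norm on `d × d` complex matrices induced by the Hermitian (Euclidean)
norm on `ℂ^d`.  For matrices with entries in `ℝ ⊆ ℂ` this restricts to the operator norm
induced by the Euclidean norm on `ℝ^d`, and `ℂ` is the algebraic closure of both `ℝ` and
`ℂ`; hence this covers both archimedean local fields. -/
def copNorm (d : ℕ) (A : Matrix (Fin d) (Fin d) ℂ) : ℝ :=
  ‖Matrix.toEuclideanCLM (𝕜 := ℂ) A‖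

/-- The norm `‖Q‖` of a set of matrices. -/
def cNorm (d : ℕ) (Q : Set (Matrix (Fin d) (Fin d) ℂ)) : ℝ :=
  sSup (copNorm d '' Q)

/-- `Q` is a bounded set of matrices. -/
def cBounded (d : ℕ) (Q : Set (Matrix (Fin d) (Fin d) ℂ)) : Prop :=
  ∃ C : ℝ, ∀ A ∈ Q, copNorm d A ≤ C

/-- The minimal norm `E(Q) = inf_{x ∈ GL_d} ‖x Q x⁻¹‖`. -/
def cE (d : ℕ) (Q : Set (Matrix (Fin d) (Fin d) ℂ)) : ℝ :=
  sInf { r | ∃ x : (Matrix (Fin d) (Fin d) ℂ)ˣ,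
    r = cNorm d ((fun g => x.val * g * x.inv) '' Q) }

/-- The maximal eigenvalue `Λ(Q) = max {|λ| : λ eigenvalue of some q ∈ Q}`. -/
def cLambda (d : ℕ) (Q : Set (Matrix (Fin d) (Fin d) ℂ)) : ℝ :=
  sSup { r | ∃ A ∈ Q, ∃ μ : ℂ, (Matrix.charpoly A).IsRoot μ ∧ r = ‖μ‖ }

/-- The spectral radius `R(Q) = lim_n ‖Q^n‖^{1/n}` (the limit exists by
submultiplicativity; `Filter.limUnder` selects it). -/
def cR (d : ℕ) (Q : Set (Matrix (Fin d) (Fin d) ℂ)) : ℝ :=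
  limUnder atTop fun n : ℕ => cNorm d (Q ^ n) ^ ((n : ℝ)⁻¹)

/-- The sup norm on `L^d` associated to an absolute value `v` on `L`. -/
def vVec {L : Type*} [Field L] (v : AbsoluteValue L ℝ) (d : ℕ) (x : Fin d → L) : ℝ :=
  sSup (Set.range fun i => v (x i))

/-- The operator norm on `d × d` matrices over `L` induced by the sup norm on `L^d`. -/
def vOp {L : Type*} [Field L] (v : AbsoluteValue L ℝ) (d : ℕ)
    (A : Matrix (Fin d) (Fin d) L) : ℝ :=
  sInf { c | 0 ≤ c ∧ ∀ x : Fin d → L, vVec v d (A.mulVec x) ≤ c * vVec v d x }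

/-- The norm `‖Q‖` of a set of matrices over `L`. -/
def vNorm {L : Type*} [Field L] (v : AbsoluteValue L ℝ) (d : ℕ)
    (Q : Set (Matrix (Fin d) (Fin d) L)) : ℝ :=
  sSup (vOp v d '' Q)

/-- The minimal norm `E(Q) = inf_{x ∈ GL_d} ‖x Q x⁻¹‖`. -/
def vE {L : Type*} [Field L] (v : AbsoluteValue L ℝ) (d : ℕ)
    (Q : Set (Matrix (Fin d) (Fin d) L)) : ℝ :=
  sInf { r | ∃ x : (Matrix (Fin d) (Fin d) L)ˣ,
    r = vNorm v d ((fun g => x.val * g * x.inv) '' Q) }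

/-- The maximal eigenvalue `Λ(Q) = max {v(μ) : μ eigenvalue of some q ∈ Q}`. -/
def vLambda {L : Type*} [Field L] (v : AbsoluteValue L ℝ) (d : ℕ)
    (Q : Set (Matrix (Fin d) (Fin d) L)) : ℝ :=
  sSup { r | ∃ A ∈ Q, ∃ μ : L, (Matrix.charpoly A).IsRoot μ ∧ r = v μ }

/-- The spectral radius `R(Q) = lim_n ‖Q^n‖^{1/n}`. -/
def vR {L : Type*} [Field L] (v : AbsoluteValue L ℝ) (d : ℕ)
    (Q : Set (Matrix (Fin d) (Fin d) L)) : ℝ :=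
  limUnder atTop fun n : ℕ => vNorm v d (Q ^ n) ^ ((n : ℝ)⁻¹)

instance (p : Nat.Primes) : Fact (p : ℕ).Prime := ⟨p.2⟩

/-- `log⁺ x = max 0 (log x)`. -/
def logPlus (x : ℝ) : ℝ := max 0 (Real.log x)

/-- The normalized height `ĥ(F)` of a set `F` of `d × d` matrices over a number field `K`:
the weighted sum, over all places of `K`, of `log⁺` of the spectral radius of `F` at that
place.  Places of `K` are accounted for by ring embeddings: summing a place-dependent
quantity over all embeddings `K →+* ℂ`, respectively over all embeddings
`K →+* (algebraic closure of ℚ_p)` for all primes `p`, counts each place `v` exactly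
`n_v` times, where `n_v` is the local degree.  Here `vp p` is the unique absolute value
on the algebraic closure of `ℚ_p` extending the standard `p`-adic absolute value
(supplied as data, together with the extension property, in the theorem). -/
def hhat (d : ℕ)
    (vp : ∀ p : Nat.Primes, AbsoluteValue (AlgebraicClosure ℚ_[(p : ℕ)]) ℝ)
    (K : Type*) [Field K] [NumberField K]
    (F : Set (Matrix (Fin d) (Fin d) K)) : ℝ :=
  (Module.finrank ℚ K : ℝ)⁻¹ *
    ((∑' σ : K →+* ℂ, logPlus (cR d ((fun A => A.map ⇑σ) '' F))) +
      ∑' p : Nat.Primes, ∑' σ : K →+* AlgebraicClosure ℚ_[(p : ℕ)],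
        logPlus (vR (vp p) d ((fun A => A.map ⇑σ) '' F)))

/-- The height `h(F)` of a set of `d × d` matrices over a number field `K` : the weighted
sum over all places of `log⁺` of the norm `‖F‖_v`. -/
def hht (d : ℕ)
    (vp : ∀ p : Nat.Primes, AbsoluteValue (AlgebraicClosure ℚ_[(p : ℕ)]) ℝ)
    (K : Type*) [Field K] [NumberField K]
    (F : Set (Matrix (Fin d) (Fin d) K)) : ℝ :=
  (Module.finrank ℚ K : ℝ)⁻¹ *
    ((∑' σ : K →+* ℂ, logPlus (cNorm d ((fun A => A.map ⇑σ) '' F))) +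
      ∑' p : Nat.Primes, ∑' σ : K →+* AlgebraicClosure ℚ_[(p : ℕ)],
        logPlus (vNorm (vp p) d ((fun A => A.map ⇑σ) '' F)))

/-! ### Auxiliary development -/

namespace Stmt14

open Real Set

/-! #### `logPlus` lemmas -/

lemma logPlus_nonneg (x : ℝ) : 0 ≤ logPlus x := le_max_left _ _

lemma logPlus_zero : logPlus 0 = 0 := by simp [logPlus]

lemma logPlus_eq_zero_of_le_one {x : ℝ} (hx : 0 ≤ x) (h : x ≤ 1) : logPlus x = 0 :=
  max_eq_left (Real.log_nonpos hx h)

lemma logPlus_mono {x y : ℝ} (hx : 0 ≤ x) (hxy : x ≤ y) : logPlus x ≤ logPlus y := by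
  rcases eq_or_lt_of_le hx with h0 | h0
  · rw [← h0, logPlus_zero]; exact logPlus_nonneg y
  · exact max_le_max le_rfl (Real.log_le_log h0 hxy)

lemma logPlus_mul_le {x y : ℝ} (hx : 0 ≤ x) (hy : 0 ≤ y) :
    logPlus (x * y) ≤ logPlus x + logPlus y := by
  rcases eq_or_lt_of_le hx with h0 | h0
  · rw [← h0, zero_mul, logPlus_zero]
    exact add_nonneg le_rfl (logPlus_nonneg _)
  rcases eq_or_lt_of_le hy with h1 | h1
  · rw [← h1, mul_zero, logPlus_zero]
    exact add_nonneg (logPlus_nonneg _) le_rfl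
  · unfold logPlus
    rw [Real.log_mul h0.ne' h1.ne']
    exact max_le (add_nonneg (le_max_left _ _) (le_max_left _ _))
      (add_le_add (le_max_right _ _) (le_max_right _ _))

/-! #### Abstract "norms of sets" in a monoid -/

section SetNorm

variable {M : Type*} [Monoid M] {f : M → ℝ}

lemma snorm_nonneg (hf0 : ∀ a, 0 ≤ f a) (Q : Set M) : 0 ≤ sSup (f '' Q) :=
  Real.sSup_nonneg (by rintro x ⟨a, _, rfl⟩; exact hf0 a)

lemma le_snorm {Q : Set M} (hQ : Q.Finite) {a : M} (ha : a ∈ Q) : f a ≤ sSup (f '' Q) :=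
  le_csSup (hQ.image f).bddAbove ⟨a, ha, rfl⟩

lemma snorm_le {Q : Set M} {c : ℝ} (hc : 0 ≤ c) (h : ∀ a ∈ Q, f a ≤ c) : sSup (f '' Q) ≤ c :=
  Real.sSup_le (by rintro x ⟨a, ha, rfl⟩; exact h a ha) hc

lemma snorm_mul_le (hf0 : ∀ a : M, 0 ≤ f a) (hfmul : ∀ a b : M, f (a * b) ≤ f a * f b)
    {P Q : Set M} (hP : P.Finite) (hQ : Q.Finite) :
    sSup (f '' (P * Q)) ≤ sSup (f '' P) * sSup (f '' Q) := by
  refine snorm_le (mul_nonneg (snorm_nonneg hf0 P) (snorm_nonneg hf0 Q)) ?_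
  rintro a ha
  rcases Set.mem_mul.1 ha with ⟨p, hp, q, hq, rfl⟩
  exact (hfmul p q).trans (mul_le_mul (le_snorm hP hp) (le_snorm hQ hq) (hf0 q)
    (snorm_nonneg hf0 P))

lemma pow_finite {F : Set M} (hF : F.Finite) : ∀ n : ℕ, (F ^ n).Finite
  | 0 => by rw [pow_zero]; exact Set.finite_one
  | n + 1 => by rw [pow_succ]; exact (pow_finite hF n).mul hF

lemma snorm_pow_le_one (hf0 : ∀ a : M, 0 ≤ f a) (hfmul : ∀ a b : M, f (a * b) ≤ f a * f b)
    (hfone : f 1 ≤ 1) {G : Set M} (hG : G.Finite) (hG1 : sSup (f '' G) ≤ 1) :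
    ∀ n : ℕ, sSup (f '' (G ^ n)) ≤ 1
  | 0 => by
      rw [pow_zero]
      refine snorm_le zero_le_one ?_
      intro a ha
      rw [Set.mem_one] at ha
      subst ha; exact hfone
  | n + 1 => by
      rw [pow_succ]
      calc sSup (f '' (G ^ n * G)) ≤ sSup (f '' (G ^ n)) * sSup (f '' G) :=
            snorm_mul_le hf0 hfmul (pow_finite hG n) hG
      _ ≤ 1 * 1 := mul_le_mul (snorm_pow_le_one hf0 hfmul hfone hG hG1 n) hG1
            (snorm_nonneg hf0 _) zero_le_one
      _ = 1 := one_mul 1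

lemma logPlus_snorm_subadd (hf0 : ∀ a : M, 0 ≤ f a) (hfmul : ∀ a b : M, f (a * b) ≤ f a * f b)
    {F : Set M} (hF : F.Finite) (m n : ℕ) :
    logPlus (sSup (f '' (F ^ (m + n)))) ≤
      logPlus (sSup (f '' (F ^ m))) + logPlus (sSup (f '' (F ^ n))) := by
  have h1 : sSup (f '' (F ^ (m + n))) ≤ sSup (f '' (F ^ m)) * sSup (f '' (F ^ n)) := by
    rw [pow_add]
    exact snorm_mul_le hf0 hfmul (pow_finite hF m) (pow_finite hF n)
  exact (logPlus_mono (snorm_nonneg hf0 _) h1).trans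
    (logPlus_mul_le (snorm_nonneg hf0 _) (snorm_nonneg hf0 _))

open Filter in
/-- The main per-place convergence result. -/
theorem snorm_pow_conv (hf0 : ∀ a : M, 0 ≤ f a) (hfmul : ∀ a b : M, f (a * b) ≤ f a * f b)
    {F : Set M} (hF : F.Finite) :
    ∃ R : ℝ, 0 ≤ R ∧
      Tendsto (fun n : ℕ => sSup (f '' (F ^ n)) ^ ((n : ℝ)⁻¹)) atTop (nhds R) ∧
      Tendsto (fun n : ℕ => logPlus (sSup (f '' (F ^ n))) / n) atTop (nhds (logPlus R)) := by
  set N : ℕ → ℝ := fun n => sSup (f '' (F ^ n)) with hN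
  have hNn : ∀ n, 0 ≤ N n := fun n => snorm_nonneg hf0 _
  have hNmul : ∀ m n, N (m + n) ≤ N m * N n := by
    intro m n
    simp only [hN, pow_add]
    exact snorm_mul_le hf0 hfmul (pow_finite hF m) (pow_finite hF n)
  by_cases hz : ∃ m, 0 < m ∧ N m = 0
  · obtain ⟨m, hm, hm0⟩ := hz
    have hzk : ∀ k, m ≤ k → N k = 0 := by
      intro k hk
      obtain ⟨j, rfl⟩ := Nat.exists_eq_add_of_le hk
      refine le_antisymm ?_ (hNn _)
      calc N (m + j) ≤ N m * N j := hNmul m j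
      _ = 0 := by rw [hm0, zero_mul]
    refine ⟨0, le_rfl, ?_, ?_⟩
    · refine Tendsto.congr' ?_ tendsto_const_nhds
      filter_upwards [eventually_ge_atTop (max m 1)] with n hn
      have h0 : sSup (f '' (F ^ n)) = 0 := hzk n (le_of_max_le_left hn)
      rw [h0, Real.zero_rpow (inv_ne_zero (Nat.cast_ne_zero.2 (by omega)))]
    · rw [logPlus_zero]
      refine Tendsto.congr' ?_ tendsto_const_nhds
      filter_upwards [eventually_ge_atTop m] with n hn
      have h0 : sSup (f '' (F ^ n)) = 0 := hzk n hn
      rw [h0, logPlus_zero, zero_div]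
  · push_neg at hz
    have hpos : ∀ m, 0 < m → 0 < N m := fun m hm => (hNn m).lt_of_ne (Ne.symm (hz m hm))
    set b : ℕ → ℝ := fun n => if n = 0 then 0 else Real.log (N n) with hbdef
    have hb : Subadditive b := by
      intro m n
      rcases Nat.eq_zero_or_pos m with rfl | hm
      · simp [hbdef]
      rcases Nat.eq_zero_or_pos n with rfl | hn
      · simp [hbdef]
      have hmn : m + n ≠ 0 := by omega
      simp only [hbdef, if_neg hm.ne', if_neg hn.ne', if_neg hmn]
      rw [← Real.log_mul (hpos m hm).ne' (hpos n hn).ne']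
      exact Real.log_le_log (hpos _ (by omega)) (hNmul m n)
    have hb0 : b 0 = 0 := by simp [hbdef]
    have key2 : ∀ n : ℕ, 1 ≤ n → N n ^ ((n : ℝ)⁻¹) = Real.exp (b n / n) := by
      intro n hn
      rw [Real.rpow_def_of_pos (hpos n hn)]
      simp only [hbdef, if_neg (by omega : ¬ n = 0)]
      rw [div_eq_mul_inv]
    have key : ∀ n : ℕ, 1 ≤ n → logPlus (N n) / n = max 0 (b n / n) := by
      intro n hn
      have hn0 : (0 : ℝ) ≤ ((n : ℝ))⁻¹ := by positivity
      simp only [hbdef, if_neg (by omega : ¬ n = 0)]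
      rw [div_eq_mul_inv, div_eq_mul_inv, logPlus, max_mul_of_nonneg _ _ hn0, zero_mul]
    by_cases hbdd : BddBelow (Set.range fun n : ℕ => b n / n)
    · refine ⟨Real.exp hb.lim, (Real.exp_pos _).le, ?_, ?_⟩
      · refine Tendsto.congr' ?_ ((Real.continuous_exp.tendsto _).comp (hb.tendsto_lim hbdd))
        filter_upwards [eventually_ge_atTop 1] with n hn
        exact (key2 n hn).symm
      · have hmax : Tendsto (fun n : ℕ => max 0 (b n / n)) atTop (nhds (max 0 hb.lim)) :=
          tendsto_const_nhds.max (hb.tendsto_lim hbdd)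
        have hlp : logPlus (Real.exp hb.lim) = max 0 hb.lim := by
          rw [logPlus, Real.log_exp]
        rw [hlp]
        refine Tendsto.congr' ?_ hmax
        filter_upwards [eventually_ge_atTop 1] with n hn
        exact (key n hn).symm
    · have hbot : Tendsto (fun n : ℕ => b n / n) atTop atBot := by
        rw [tendsto_atBot]
        intro M
        obtain ⟨m, hmlt⟩ : ∃ m : ℕ, b m / m < min (M - 1) (-1) := by
          by_contra hcon
          push_neg at hcon
          exact hbdd ⟨min (M - 1) (-1), by rintro x ⟨n, rfl⟩; exact hcon n⟩
        have hm : m ≠ 0 := by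
          rintro rfl
          rw [hb0] at hmlt
          simp only [Nat.cast_zero, zero_div] at hmlt
          have := min_le_right (M - 1) (-1 : ℝ)
          linarith
        set t := b m / m with ht
        have hc : Subadditive fun n : ℕ => max (b n) (n * t) := by
          intro k l
          apply max_le
          · exact (hb k l).trans (add_le_add (le_max_left _ _) (le_max_left _ _))
          · have hkl : ((k + l : ℕ) : ℝ) * t = (k : ℝ) * t + (l : ℝ) * t := by push_cast; ring
            rw [hkl]
            exact add_le_add (le_max_right _ _) (le_max_right _ _)
        have hcb : BddBelow (Set.range fun n : ℕ => max (b n) ((n : ℝ) * t) / n) := by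
          refine ⟨min t 0, ?_⟩
          rintro x ⟨n, rfl⟩
          rcases Nat.eq_zero_or_pos n with rfl | hn
          · simp [hb0, min_le_right t 0]
          · have hn' : (0 : ℝ) < (n : ℝ) := by exact_mod_cast hn
            have h1 : t ≤ max (b n) ((n : ℝ) * t) / n := by
              rw [le_div_iff₀ hn']
              calc t * n = (n : ℝ) * t := by ring
              _ ≤ max (b n) ((n : ℝ) * t) := le_max_right _ _
            exact le_trans (min_le_left _ _) h1
        have hlimle : hc.lim ≤ t := by
          refine (hc.lim_le_div hcb hm).trans ?_
          have hm' : (0 : ℝ) < (m : ℝ) := by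
            exact_mod_cast Nat.pos_of_ne_zero hm
          have hbm : b m = t * m := by rw [ht]; field_simp
          rw [hbm]
          rw [show max (t * (m : ℝ)) ((m : ℝ) * t) = t * m by rw [mul_comm (m : ℝ) t, max_self]]
          rw [mul_div_assoc, div_self hm'.ne', mul_one]
        have hev : ∀ᶠ n : ℕ in atTop, max (b n) ((n : ℝ) * t) / n < t + 1 :=
          (hc.tendsto_lim hcb).eventually (gt_mem_nhds (hlimle.trans_lt (lt_add_one t)))
        filter_upwards [hev, eventually_ge_atTop 1] with n hn hn1
        have hn' : (0 : ℝ) < (n : ℝ) := by exact_mod_cast hn1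
        have h1 : b n / n ≤ max (b n) ((n : ℝ) * t) / n :=
          div_le_div_of_nonneg_right (le_max_left _ _) hn'.le
        have h2 : t + 1 ≤ M := by
          have := min_le_left (M - 1) (-1 : ℝ)
          linarith
        linarith [lt_of_le_of_lt h1 hn]
      refine ⟨0, le_rfl, ?_, ?_⟩
      · refine Tendsto.congr' ?_ (Real.tendsto_exp_atBot.comp hbot)
        filter_upwards [eventually_ge_atTop 1] with n hn
        exact (key2 n hn).symm
      · rw [logPlus_zero]
        refine Tendsto.congr' ?_ tendsto_const_nhds
        filter_upwards [hbot.eventually (eventually_le_atBot 0), eventually_ge_atTop 1]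
          with n hn hn1
        exact ((key n hn1).trans (max_eq_left hn)).symm

end SetNorm

end Stmt14


namespace Stmt14

open Real Set Filter

/-! #### The complex operator norm -/

lemma copNorm_nonneg (d : ℕ) (A : Matrix (Fin d) (Fin d) ℂ) : 0 ≤ copNorm d A :=
  norm_nonneg _

lemma copNorm_mul_le (d : ℕ) (A B : Matrix (Fin d) (Fin d) ℂ) :
    copNorm d (A * B) ≤ copNorm d A * copNorm d B := by
  unfold copNorm
  rw [map_mul]
  exact norm_mul_le _ _

lemma copNorm_one_le (d : ℕ) : copNorm d (1 : Matrix (Fin d) (Fin d) ℂ) ≤ 1 := by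
  unfold copNorm
  rw [map_one, ContinuousLinearMap.one_def]
  exact ContinuousLinearMap.norm_id_le

/-! #### The `v`-adic operator norm -/

section vop

variable {L : Type*} [Field L] (v : AbsoluteValue L ℝ) (d : ℕ)

lemma vVec_nonneg (x : Fin d → L) : 0 ≤ vVec v d x :=
  Real.sSup_nonneg (by rintro r ⟨i, rfl⟩; exact v.nonneg _)

lemma le_vVec (x : Fin d → L) (i : Fin d) : v (x i) ≤ vVec v d x :=
  le_csSup (Set.finite_range _).bddAbove ⟨i, rfl⟩

lemma vVec_le {x : Fin d → L} {c : ℝ} (hc : 0 ≤ c) (h : ∀ i, v (x i) ≤ c) : vVec v d x ≤ c :=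
  Real.sSup_le (by rintro r ⟨i, rfl⟩; exact h i) hc

/-- The defining set of the operator norm. -/
def vOpSet (A : Matrix (Fin d) (Fin d) L) : Set ℝ :=
  { c | 0 ≤ c ∧ ∀ x : Fin d → L, vVec v d (A.mulVec x) ≤ c * vVec v d x }

lemma vOp_eq_sInf (A : Matrix (Fin d) (Fin d) L) : vOp v d A = sInf (vOpSet v d A) := rfl

lemma vOpSet_nonempty (A : Matrix (Fin d) (Fin d) L) : (vOpSet v d A).Nonempty := by
  refine ⟨∑ i : Fin d, ∑ j : Fin d, v (A i j), ?_, ?_⟩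
  · exact Finset.sum_nonneg fun i _ => Finset.sum_nonneg fun j _ => v.nonneg _
  · intro x
    set c₀ : ℝ := ∑ i : Fin d, ∑ j : Fin d, v (A i j) with hc₀
    have hc0 : 0 ≤ c₀ := Finset.sum_nonneg fun i _ => Finset.sum_nonneg fun j _ => v.nonneg _
    refine vVec_le v d (mul_nonneg hc0 (vVec_nonneg v d x)) fun i => ?_
    have hAi : (A.mulVec x) i = ∑ j : Fin d, A i j * x j := by
      simp [Matrix.mulVec, dotProduct]
    rw [hAi]
    calc v (∑ j : Fin d, A i j * x j) ≤ ∑ j : Fin d, v (A i j * x j) := v.sum_le _ _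
    _ = ∑ j : Fin d, v (A i j) * v (x j) := by simp [v.map_mul]
    _ ≤ ∑ j : Fin d, v (A i j) * vVec v d x :=
        Finset.sum_le_sum fun j _ => mul_le_mul_of_nonneg_left (le_vVec v d x j) (v.nonneg _)
    _ = (∑ j : Fin d, v (A i j)) * vVec v d x := by rw [Finset.sum_mul]
    _ ≤ c₀ * vVec v d x := by
        refine mul_le_mul_of_nonneg_right ?_ (vVec_nonneg v d x)
        exact Finset.single_le_sum (f := fun i => ∑ j : Fin d, v (A i j))
          (fun i _ => Finset.sum_nonneg fun j _ => v.nonneg _) (Finset.mem_univ i)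

lemma vOp_mem (A : Matrix (Fin d) (Fin d) L) : vOp v d A ∈ vOpSet v d A := by
  have hclosed : IsClosed (vOpSet v d A) := by
    have heq : vOpSet v d A =
        Set.Ici 0 ∩ ⋂ x : Fin d → L, { c | vVec v d (A.mulVec x) ≤ c * vVec v d x } := by
      ext c
      simp only [vOpSet, Set.mem_inter_iff, Set.mem_Ici, Set.mem_iInter, Set.mem_setOf_eq]
    rw [heq]
    exact isClosed_Ici.inter (isClosed_iInter fun x =>
      isClosed_le continuous_const (continuous_id.mul continuous_const))
  rw [vOp_eq_sInf]
  exact hclosed.csInf_mem (vOpSet_nonempty v d A) ⟨0, fun c hc => hc.1⟩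

lemma vOp_nonneg (A : Matrix (Fin d) (Fin d) L) : 0 ≤ vOp v d A := (vOp_mem v d A).1

lemma vOp_apply_le (A : Matrix (Fin d) (Fin d) L) (x : Fin d → L) :
    vVec v d (A.mulVec x) ≤ vOp v d A * vVec v d x := (vOp_mem v d A).2 x

lemma vOp_le {A : Matrix (Fin d) (Fin d) L} {c : ℝ} (hc : c ∈ vOpSet v d A) : vOp v d A ≤ c := by
  rw [vOp_eq_sInf]
  exact csInf_le ⟨0, fun r hr => hr.1⟩ hc

lemma vOp_mul_le (A B : Matrix (Fin d) (Fin d) L) :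
    vOp v d (A * B) ≤ vOp v d A * vOp v d B := by
  refine vOp_le v d ⟨mul_nonneg (vOp_nonneg v d A) (vOp_nonneg v d B), fun x => ?_⟩
  rw [← Matrix.mulVec_mulVec]
  calc vVec v d (A.mulVec (B.mulVec x)) ≤ vOp v d A * vVec v d (B.mulVec x) :=
        vOp_apply_le v d A _
  _ ≤ vOp v d A * (vOp v d B * vVec v d x) :=
        mul_le_mul_of_nonneg_left (vOp_apply_le v d B x) (vOp_nonneg v d A)
  _ = vOp v d A * vOp v d B * vVec v d x := (mul_assoc _ _ _).symm

lemma vOp_one_le : vOp v d (1 : Matrix (Fin d) (Fin d) L) ≤ 1 :=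
  vOp_le v d ⟨zero_le_one, fun x => by rw [Matrix.one_mulVec, one_mul]⟩

/-! #### Nonarchimedean absolute values -/

lemma na_sum_le {v : AbsoluteValue L ℝ} (hna : ∀ x y : L, v (x + y) ≤ max (v x) (v y))
    {ι : Type*} (s : Finset ι) (g : ι → L) {c : ℝ} (hc : 0 ≤ c)
    (h : ∀ i ∈ s, v (g i) ≤ c) : v (∑ i ∈ s, g i) ≤ c := by
  classical
  induction s using Finset.cons_induction with
  | empty => simpa using hc
  | cons a s ha ih =>
    rw [Finset.sum_cons]
    exact (hna _ _).trans (max_le (h a (Finset.mem_cons_self _ _))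
      (ih fun i hi => h i (Finset.mem_cons.2 (Or.inr hi))))

lemma vOp_le_one {v : AbsoluteValue L ℝ} (hna : ∀ x y : L, v (x + y) ≤ max (v x) (v y))
    {A : Matrix (Fin d) (Fin d) L} (hA : ∀ i j, v (A i j) ≤ 1) : vOp v d A ≤ 1 := by
  refine vOp_le v d ⟨zero_le_one, fun x => ?_⟩
  rw [one_mul]
  refine vVec_le v d (vVec_nonneg v d x) fun i => ?_
  have hAi : (A.mulVec x) i = ∑ j : Fin d, A i j * x j := by
    simp [Matrix.mulVec, dotProduct]
  rw [hAi]
  refine na_sum_le hna _ _ (vVec_nonneg v d x) fun j _ => ?_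
  calc v (A i j * x j) = v (A i j) * v (x j) := v.map_mul _ _
  _ ≤ 1 * v (x j) := mul_le_mul_of_nonneg_right (hA i j) (v.nonneg _)
  _ = v (x j) := one_mul _
  _ ≤ vVec v d x := le_vVec v d x j

end vop

lemma absval_nonarch {L : Type*} [Field L] (v : AbsoluteValue L ℝ)
    (h : ∀ n : ℕ, v (n : L) ≤ 1) (x y : L) : v (x + y) ≤ max (v x) (v y) := by
  letI : NormedField L := v.toNormedField
  have hU : IsUltrametricDist L :=
    IsUltrametricDist.isUltrametricDist_of_forall_norm_natCast_le_one h
  exact IsUltrametricDist.norm_add_le_max x y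

lemma root_le_one {L : Type*} [Field L] (v : AbsoluteValue L ℝ)
    (hna : ∀ x y : L, v (x + y) ≤ max (v x) (v y))
    {q : Polynomial L} (hq : q.Monic) (hc : ∀ i, v (q.coeff i) ≤ 1)
    {x : L} (hx : q.eval x = 0) : v x ≤ 1 := by
  by_contra hgt
  push_neg at hgt
  set n := q.natDegree with hn
  have hn0 : n ≠ 0 := by
    intro h0
    have hq1 : q = 1 := hq.natDegree_eq_zero.1 h0
    rw [hq1] at hx
    simp at hx
  have heval : (∑ i ∈ Finset.range n, q.coeff i * x ^ i) + x ^ n = 0 := by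
    have h1 : q.eval x = ∑ i ∈ Finset.range (n + 1), q.coeff i * x ^ i := by
      rw [Polynomial.eval_eq_sum_range]
    rw [Finset.sum_range_succ] at h1
    rw [← hx, h1, hq.coeff_natDegree, one_mul]
  have hx2 : x ^ n = -(∑ i ∈ Finset.range n, q.coeff i * x ^ i) := eq_neg_of_add_eq_zero_right heval
  have hsum : v (∑ i ∈ Finset.range n, q.coeff i * x ^ i) ≤ v x ^ (n - 1) := by
    refine na_sum_le hna _ _ (pow_nonneg (v.nonneg x) _) fun i hi => ?_
    rw [v.map_mul, map_pow]
    calc v (q.coeff i) * v x ^ i ≤ 1 * v x ^ i :=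
          mul_le_mul_of_nonneg_right (hc i) (pow_nonneg (v.nonneg x) i)
    _ = v x ^ i := one_mul _
    _ ≤ v x ^ (n - 1) := by
        refine pow_le_pow_right₀ hgt.le ?_
        have := Finset.mem_range.1 hi
        omega
  have hfin : v x ^ n ≤ v x ^ (n - 1) := by
    calc v x ^ n = v (x ^ n) := (map_pow v x n).symm
    _ = v (∑ i ∈ Finset.range n, q.coeff i * x ^ i) := by rw [hx2, v.map_neg]
    _ ≤ v x ^ (n - 1) := hsum
  have hlt : v x ^ (n - 1) < v x ^ n := pow_lt_pow_right₀ hgt (by omega)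
  linarith

/-! #### Rational and `p`-adic facts -/

lemma norm_ratCast_le_one_of_not_dvd (p : Nat.Primes) (c : ℚ) (h : ¬ ((p : ℕ) ∣ c.den)) :
    ‖(c : ℚ_[(p : ℕ)])‖ ≤ 1 := by
  rw [Rat.cast_def, norm_div]
  have hden : ‖((c.den : ℤ) : ℚ_[(p : ℕ)])‖ = 1 := by
    have hle := Padic.norm_int_le_one (p := (p : ℕ)) (c.den : ℤ)
    have hnlt : ¬ ‖((c.den : ℤ) : ℚ_[(p : ℕ)])‖ < 1 := by
      rw [Padic.norm_intCast_lt_one_iff]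
      exact_mod_cast h
    exact le_antisymm hle (not_lt.1 hnlt)
  have hcast : ((c.den : ℚ_[(p : ℕ)])) = (((c.den : ℤ) : ℚ_[(p : ℕ)])) := by push_cast; ring
  rw [hcast, hden, div_one]
  exact Padic.norm_int_le_one _

lemma finite_bad_primes (c : ℚ) : {p : Nat.Primes | ¬ ‖(c : ℚ_[(p : ℕ)])‖ ≤ 1}.Finite := by
  have hsub : {p : Nat.Primes | ¬ ‖(c : ℚ_[(p : ℕ)])‖ ≤ 1} ⊆
      (fun p : Nat.Primes => (p : ℕ)) ⁻¹' Set.Iic c.den := by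
    intro p hp
    simp only [Set.mem_setOf_eq] at hp
    have hdvd : (p : ℕ) ∣ c.den := by
      by_contra hd
      exact hp (norm_ratCast_le_one_of_not_dvd p c hd)
    exact Nat.le_of_dvd c.pos hdvd
  exact ((Set.finite_Iic c.den).preimage
    (Set.injOn_of_injective (fun a b hab => Subtype.ext hab))).subset hsub

lemma vp_algebraMap_rat (p : Nat.Primes) (vp : AbsoluteValue (AlgebraicClosure ℚ_[(p : ℕ)]) ℝ)
    (hvp : ∀ x : ℚ_[(p : ℕ)], vp (algebraMap ℚ_[(p : ℕ)] (AlgebraicClosure ℚ_[(p : ℕ)]) x) = ‖x‖)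
    (c : ℚ) : vp ((c : AlgebraicClosure ℚ_[(p : ℕ)])) = ‖(c : ℚ_[(p : ℕ)])‖ := by
  have h1 : ((c : AlgebraicClosure ℚ_[(p : ℕ)])) =
      algebraMap ℚ_[(p : ℕ)] (AlgebraicClosure ℚ_[(p : ℕ)]) ((c : ℚ_[(p : ℕ)])) :=
    (map_ratCast _ c).symm
  rw [h1, hvp]

lemma vp_nat_le_one (p : Nat.Primes) (vp : AbsoluteValue (AlgebraicClosure ℚ_[(p : ℕ)]) ℝ)
    (hvp : ∀ x : ℚ_[(p : ℕ)], vp (algebraMap ℚ_[(p : ℕ)] (AlgebraicClosure ℚ_[(p : ℕ)]) x) = ‖x‖)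
    (n : ℕ) : vp ((n : AlgebraicClosure ℚ_[(p : ℕ)])) ≤ 1 := by
  have h1 : ((n : AlgebraicClosure ℚ_[(p : ℕ)])) =
      algebraMap ℚ_[(p : ℕ)] (AlgebraicClosure ℚ_[(p : ℕ)]) ((n : ℚ_[(p : ℕ)])) :=
    (map_natCast _ n).symm
  rw [h1, hvp]
  have h2 : ((n : ℚ_[(p : ℕ)])) = (((n : ℤ) : ℚ_[(p : ℕ)])) := by push_cast; ring
  rw [h2]
  exact Padic.norm_int_le_one _

lemma vp_entry_le_one {K : Type} [Field K] [NumberField K] (p : Nat.Primes)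
    (vp : AbsoluteValue (AlgebraicClosure ℚ_[(p : ℕ)]) ℝ)
    (hvp : ∀ x : ℚ_[(p : ℕ)], vp (algebraMap ℚ_[(p : ℕ)] (AlgebraicClosure ℚ_[(p : ℕ)]) x) = ‖x‖)
    (x : K)
    (hcoeff : ∀ k, ‖(((minpoly ℚ x).coeff k : ℚ) : ℚ_[(p : ℕ)])‖ ≤ 1)
    (σ : K →+* AlgebraicClosure ℚ_[(p : ℕ)]) : vp (σ x) ≤ 1 := by
  have hna := absval_nonarch vp (vp_nat_le_one p vp hvp)
  have hint : IsIntegral ℚ x := Algebra.IsIntegral.isIntegral x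
  set q := minpoly ℚ x with hqdef
  have hq : q.Monic := minpoly.monic hint
  set qp := q.map (algebraMap ℚ (AlgebraicClosure ℚ_[(p : ℕ)])) with hqp
  have hqpm : qp.Monic := hq.map _
  let σ' : K →ₐ[ℚ] AlgebraicClosure ℚ_[(p : ℕ)] :=
    { toRingHom := σ
      commutes' := fun r => by
        show σ (algebraMap ℚ K r) = _
        rw [eq_ratCast (algebraMap ℚ K) r, map_ratCast σ r, eq_ratCast] }
  have heval : qp.eval (σ x) = 0 := by
    have h0 : Polynomial.aeval (σ' x) q = 0 := by
      rw [Polynomial.aeval_algHom_apply σ' x q, minpoly.aeval, map_zero]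
    have h1 : Polynomial.aeval (σ x) q = 0 := h0
    rwa [Polynomial.aeval_def, ← Polynomial.eval_map] at h1
  refine root_le_one vp hna hqpm ?_ heval
  intro k
  rw [hqp, Polynomial.coeff_map, eq_ratCast, vp_algebraMap_rat p vp hvp]
  exact hcoeff k

/-! #### Images of matrix sets under ring homomorphisms -/

lemma image_map_pow {K R : Type*} [Field K] [CommRing R] (d : ℕ) (σ : K →+* R)
    (F : Set (Matrix (Fin d) (Fin d) K)) (n : ℕ) :
    (fun A : Matrix (Fin d) (Fin d) K => A.map ⇑σ) '' (F ^ n) =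
      ((fun A : Matrix (Fin d) (Fin d) K => A.map ⇑σ) '' F) ^ n := by
  have h : (fun A : Matrix (Fin d) (Fin d) K => A.map ⇑σ) = ⇑(σ.mapMatrix (m := Fin d)) := by
    funext A
    rfl
  rw [h]
  exact Set.image_pow _ _ n

end Stmt14


open Stmt14

theorem normalized_height_eq_lim_heights (d : ℕ)
    (vp : ∀ p : Nat.Primes, AbsoluteValue (AlgebraicClosure ℚ_[(p : ℕ)]) ℝ)
    (hvp : ∀ (p : Nat.Primes) (x : ℚ_[(p : ℕ)]),
      vp p (algebraMap ℚ_[(p : ℕ)] (AlgebraicClosure ℚ_[(p : ℕ)]) x) = ‖x‖)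
    (K : Type) [Field K] [NumberField K]
    (F : Set (Matrix (Fin d) (Fin d) K)) (hF : F.Finite) :
    Tendsto (fun n : ℕ => (n : ℝ)⁻¹ * hht d vp K (F ^ n)) atTop (nhds (hhat d vp K F)) ∧
      hhat d vp K F
        = sInf { x : ℝ | ∃ n : ℕ, 0 < n ∧ x = (n : ℝ)⁻¹ * hht d vp K (F ^ n) } := by
  classical
  have hcop0 : ∀ A : Matrix (Fin d) (Fin d) ℂ, 0 ≤ copNorm d A := copNorm_nonneg d
  have hcopm := copNorm_mul_le d
  -- archimedean spectral radii
  have harchex := fun σ : K →+* ℂ =>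
    snorm_pow_conv (f := copNorm d) hcop0 hcopm (hF.image (fun A => A.map ⇑σ))
  choose Rc hRc0 hRc1 hRc2 using harchex
  -- p-adic spectral radii
  have hpadex := fun (p : Nat.Primes) (σ : K →+* AlgebraicClosure ℚ_[(p : ℕ)]) =>
    snorm_pow_conv (f := vOp (vp p) d) (vOp_nonneg (vp p) d) (vOp_mul_le (vp p) d)
      (hF.image (fun A => A.map ⇑σ))
  choose Rv hRv0 hRv1 hRv2 using hpadex
  have hcR : ∀ σ : K →+* ℂ, cR d ((fun A => A.map ⇑σ) '' F) = Rc σ := fun σ =>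
    (hRc1 σ).limUnder_eq
  have hvR : ∀ (p : Nat.Primes) (σ : K →+* AlgebraicClosure ℚ_[(p : ℕ)]),
      vR (vp p) d ((fun A => A.map ⇑σ) '' F) = Rv p σ := fun p σ => (hRv1 p σ).limUnder_eq
  -- the bad primes
  let Bad : Set Nat.Primes :=
    ⋃ A ∈ F, ⋃ i : Fin d, ⋃ j : Fin d,
      ⋃ k ∈ Finset.range ((minpoly ℚ (A i j)).natDegree + 1),
        { p : Nat.Primes | ¬ ‖((minpoly ℚ (A i j)).coeff k : ℚ_[(p : ℕ)])‖ ≤ 1 }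
  have hBadfin : Bad.Finite := by
    refine hF.biUnion fun A _ => ?_
    refine Set.finite_iUnion fun i => ?_
    refine Set.finite_iUnion fun j => ?_
    refine Set.Finite.biUnion (Finset.range _).finite_toSet fun k _ => ?_
    exact finite_bad_primes _
  have hnaP : ∀ p : Nat.Primes, ∀ x y : AlgebraicClosure ℚ_[(p : ℕ)],
      vp p (x + y) ≤ max (vp p x) (vp p y) :=
    fun p => absval_nonarch (vp p) (vp_nat_le_one p (vp p) (hvp p))
  have hgood : ∀ p ∉ Bad, ∀ σ : K →+* AlgebraicClosure ℚ_[(p : ℕ)], ∀ A ∈ F,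
      ∀ i j, vp p ((A.map ⇑σ) i j) ≤ 1 := by
    intro p hp σ A hA i j
    refine vp_entry_le_one p (vp p) (hvp p) (A i j) ?_ σ
    intro k
    by_cases hk : k ∈ Finset.range ((minpoly ℚ (A i j)).natDegree + 1)
    · by_contra hcon
      refine hp ?_
      simp only [Bad, Set.mem_iUnion, Set.mem_setOf_eq, Finset.mem_range]
      exact ⟨A, hA, i, j, k, Finset.mem_range.1 hk, hcon⟩
    · have hkk : (minpoly ℚ (A i j)).natDegree < k := by
        simp only [Finset.mem_range] at hk; omega
      rw [Polynomial.coeff_eq_zero_of_natDegree_lt hkk]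
      simp
  have hgoodN : ∀ p ∉ Bad, ∀ σ : K →+* AlgebraicClosure ℚ_[(p : ℕ)], ∀ n : ℕ,
      vNorm (vp p) d ((fun A => A.map ⇑σ) '' (F ^ n)) ≤ 1 := by
    intro p hp σ n
    have hG1 : sSup (vOp (vp p) d '' ((fun A => A.map ⇑σ) '' F)) ≤ 1 := by
      refine snorm_le zero_le_one ?_
      rintro B ⟨A, hA, rfl⟩
      exact vOp_le_one d (hnaP p) (hgood p hp σ A hA)
    have h2 := snorm_pow_le_one (vOp_nonneg (vp p) d) (vOp_mul_le (vp p) d)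
      (vOp_one_le (vp p) d) (hF.image _) hG1 n
    rw [show (fun A : Matrix (Fin d) (Fin d) K => A.map ⇑σ) '' (F ^ n)
        = ((fun A : Matrix (Fin d) (Fin d) K => A.map ⇑σ) '' F) ^ n from image_map_pow d σ F n]
    exact h2
  have hgoodLP : ∀ p ∉ Bad, ∀ σ : K →+* AlgebraicClosure ℚ_[(p : ℕ)], ∀ n : ℕ,
      logPlus (vNorm (vp p) d ((fun A => A.map ⇑σ) '' (F ^ n))) = 0 :=
    fun p hp σ n => logPlus_eq_zero_of_le_one
      (snorm_nonneg (vOp_nonneg (vp p) d) _) (hgoodN p hp σ n)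
  have hgoodR : ∀ p ∉ Bad, ∀ σ : K →+* AlgebraicClosure ℚ_[(p : ℕ)],
      logPlus (vR (vp p) d ((fun A => A.map ⇑σ) '' F)) = 0 := by
    intro p hp σ
    rw [hvR p σ]
    have h3 : Tendsto (fun n : ℕ =>
        logPlus (sSup (vOp (vp p) d '' (((fun A => A.map ⇑σ) '' F) ^ n))) / n) atTop
        (nhds 0) := by
      refine Tendsto.congr' ?_ tendsto_const_nhds
      refine Filter.Eventually.of_forall fun n => ?_
      have h4 : logPlus (sSup (vOp (vp p) d '' (((fun A => A.map ⇑σ) '' F) ^ n))) = 0 := by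
        rw [← image_map_pow]
        exact hgoodLP p hp σ n
      simp [h4]
    exact tendsto_nhds_unique (hRv2 p σ) h3
  -- the formulas for hht and hhat as finite sums
  have hht_eq : ∀ n : ℕ, hht d vp K (F ^ n) =
      (Module.finrank ℚ K : ℝ)⁻¹ *
        ((∑ σ : K →+* ℂ, logPlus (cNorm d ((fun A => A.map ⇑σ) '' (F ^ n)))) +
          ∑ p ∈ hBadfin.toFinset, ∑ σ : K →+* AlgebraicClosure ℚ_[(p : ℕ)],
            logPlus (vNorm (vp p) d ((fun A => A.map ⇑σ) '' (F ^ n)))) := by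
    intro n
    unfold hht
    congr 1
    congr 1
    · exact tsum_fintype _
    · rw [tsum_eq_sum (s := hBadfin.toFinset) ?_]
      · exact Finset.sum_congr rfl fun p _ => tsum_fintype _
      · intro p hp
        have hp' : p ∉ Bad := by
          rw [← hBadfin.mem_toFinset]; exact hp
        rw [tsum_fintype]
        exact Finset.sum_eq_zero fun σ _ => hgoodLP p hp' σ n
  have hhat_eq : hhat d vp K F =
      (Module.finrank ℚ K : ℝ)⁻¹ *
        ((∑ σ : K →+* ℂ, logPlus (Rc σ)) +
          ∑ p ∈ hBadfin.toFinset, ∑ σ : K →+* AlgebraicClosure ℚ_[(p : ℕ)],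
            logPlus (Rv p σ)) := by
    unfold hhat
    congr 1
    congr 1
    · rw [tsum_fintype]
      exact Finset.sum_congr rfl fun σ _ => by rw [hcR σ]
    · rw [tsum_eq_sum (s := hBadfin.toFinset) ?_]
      · refine Finset.sum_congr rfl fun p _ => ?_
        rw [tsum_fintype]
        exact Finset.sum_congr rfl fun σ _ => by rw [hvR p σ]
      · intro p hp
        have hp' : p ∉ Bad := by
          rw [← hBadfin.mem_toFinset]; exact hp
        rw [tsum_fintype]
        exact Finset.sum_eq_zero fun σ _ => hgoodR p hp' σ
  -- per-place limits of the normalized heights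
  have harch : ∀ σ : K →+* ℂ, Tendsto
      (fun n : ℕ => logPlus (cNorm d ((fun A => A.map ⇑σ) '' (F ^ n))) / n) atTop
      (nhds (logPlus (Rc σ))) := by
    intro σ
    refine (hRc2 σ).congr fun n => ?_
    rw [show ((fun A : Matrix (Fin d) (Fin d) K => A.map ⇑σ) '' F) ^ n
        = (fun A : Matrix (Fin d) (Fin d) K => A.map ⇑σ) '' (F ^ n) from
        (image_map_pow d σ F n).symm]
    exact rfl
  have hpad : ∀ (p : Nat.Primes) (σ : K →+* AlgebraicClosure ℚ_[(p : ℕ)]), Tendsto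
      (fun n : ℕ => logPlus (vNorm (vp p) d ((fun A => A.map ⇑σ) '' (F ^ n))) / n) atTop
      (nhds (logPlus (Rv p σ))) := by
    intro p σ
    refine (hRv2 p σ).congr fun n => ?_
    rw [show ((fun A : Matrix (Fin d) (Fin d) K => A.map ⇑σ) '' F) ^ n
        = (fun A : Matrix (Fin d) (Fin d) K => A.map ⇑σ) '' (F ^ n) from
        (image_map_pow d σ F n).symm]
    exact rfl
  -- first conjunct: convergence to the normalized height
  have hT : Tendsto (fun n : ℕ => (n : ℝ)⁻¹ * hht d vp K (F ^ n)) atTop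
      (nhds (hhat d vp K F)) := by
    have hsum : Tendsto (fun n : ℕ =>
        (Module.finrank ℚ K : ℝ)⁻¹ *
          ((∑ σ : K →+* ℂ, logPlus (cNorm d ((fun A => A.map ⇑σ) '' (F ^ n))) / n) +
            ∑ p ∈ hBadfin.toFinset, ∑ σ : K →+* AlgebraicClosure ℚ_[(p : ℕ)],
              logPlus (vNorm (vp p) d ((fun A => A.map ⇑σ) '' (F ^ n))) / n)) atTop
        (nhds ((Module.finrank ℚ K : ℝ)⁻¹ *
          ((∑ σ : K →+* ℂ, logPlus (Rc σ)) +
            ∑ p ∈ hBadfin.toFinset, ∑ σ : K →+* AlgebraicClosure ℚ_[(p : ℕ)],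
              logPlus (Rv p σ)))) := by
      refine Tendsto.const_mul _ (Tendsto.add ?_ ?_)
      · exact tendsto_finset_sum _ fun σ _ => harch σ
      · exact tendsto_finset_sum _ fun p _ => tendsto_finset_sum _ fun σ _ => hpad p σ
    rw [hhat_eq]
    refine hsum.congr fun n => ?_
    rw [hht_eq n]
    simp only [← Finset.sum_div]
    rw [div_eq_mul_inv, div_eq_mul_inv]
    ring
  -- subadditivity and Fekete
  have hnn : ∀ n, 0 ≤ hht d vp K (F ^ n) := by
    intro n
    rw [hht_eq n]
    refine mul_nonneg (by positivity) (add_nonneg ?_ ?_)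
    · exact Finset.sum_nonneg fun σ _ => logPlus_nonneg _
    · exact Finset.sum_nonneg fun p _ => Finset.sum_nonneg fun σ _ => logPlus_nonneg _
  have hsub : Subadditive fun n => hht d vp K (F ^ n) := by
    intro m n
    show hht d vp K (F ^ (m + n)) ≤ hht d vp K (F ^ m) + hht d vp K (F ^ n)
    rw [hht_eq, hht_eq, hht_eq, ← mul_add]
    refine mul_le_mul_of_nonneg_left ?_ (by positivity)
    have h1 : ∀ σ : K →+* ℂ,
        logPlus (cNorm d ((fun A => A.map ⇑σ) '' (F ^ (m + n)))) ≤
          logPlus (cNorm d ((fun A => A.map ⇑σ) '' (F ^ m))) +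
            logPlus (cNorm d ((fun A => A.map ⇑σ) '' (F ^ n))) := by
      intro σ
      rw [image_map_pow, image_map_pow, image_map_pow]
      exact logPlus_snorm_subadd hcop0 hcopm (hF.image _) m n
    have h2 : ∀ (p : Nat.Primes) (σ : K →+* AlgebraicClosure ℚ_[(p : ℕ)]),
        logPlus (vNorm (vp p) d ((fun A => A.map ⇑σ) '' (F ^ (m + n)))) ≤
          logPlus (vNorm (vp p) d ((fun A => A.map ⇑σ) '' (F ^ m))) +
            logPlus (vNorm (vp p) d ((fun A => A.map ⇑σ) '' (F ^ n))) := by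
      intro p σ
      rw [image_map_pow, image_map_pow, image_map_pow]
      exact logPlus_snorm_subadd (vOp_nonneg (vp p) d) (vOp_mul_le (vp p) d) (hF.image _) m n
    calc (∑ σ : K →+* ℂ, logPlus (cNorm d ((fun A => A.map ⇑σ) '' (F ^ (m + n))))) +
          ∑ p ∈ hBadfin.toFinset, ∑ σ : K →+* AlgebraicClosure ℚ_[(p : ℕ)],
            logPlus (vNorm (vp p) d ((fun A => A.map ⇑σ) '' (F ^ (m + n))))
        ≤ (∑ σ : K →+* ℂ,
            (logPlus (cNorm d ((fun A => A.map ⇑σ) '' (F ^ m))) +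
              logPlus (cNorm d ((fun A => A.map ⇑σ) '' (F ^ n))))) +
          ∑ p ∈ hBadfin.toFinset, ∑ σ : K →+* AlgebraicClosure ℚ_[(p : ℕ)],
            (logPlus (vNorm (vp p) d ((fun A => A.map ⇑σ) '' (F ^ m))) +
              logPlus (vNorm (vp p) d ((fun A => A.map ⇑σ) '' (F ^ n)))) := by
          refine add_le_add (Finset.sum_le_sum fun σ _ => h1 σ) ?_
          exact Finset.sum_le_sum fun p _ => Finset.sum_le_sum fun σ _ => h2 p σ
    _ = _ := by
          simp only [Finset.sum_add_distrib]
          ring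
  have hbdd : BddBelow (Set.range fun n : ℕ => hht d vp K (F ^ n) / n) :=
    ⟨0, by rintro x ⟨n, rfl⟩; exact div_nonneg (hnn n) (Nat.cast_nonneg n)⟩
  have hlim2 := hsub.tendsto_lim hbdd
  have hfeq : (fun n : ℕ => (n : ℝ)⁻¹ * hht d vp K (F ^ n)) =
      fun n : ℕ => hht d vp K (F ^ n) / n := by
    funext n
    rw [div_eq_mul_inv, mul_comm]
  refine ⟨hT, ?_⟩
  have h4 : hhat d vp K F = hsub.lim := by
    refine tendsto_nhds_unique ?_ hlim2
    rw [← hfeq]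
    exact hT
  rw [h4, Subadditive.lim]
  congr 1
  ext x
  simp only [Set.mem_image, Set.mem_setOf_eq, Set.mem_Ici]
  constructor
  · rintro ⟨n, hn, hx⟩
    exact ⟨n, by omega, by rw [← hx, div_eq_mul_inv, mul_comm]⟩
  · rintro ⟨n, hn, hx⟩
    exact ⟨n, by omega, by rw [hx, div_eq_mul_inv, mul_comm]⟩
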